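/- For the 4-dimensional group Γ ≤ Isom(ℝ⁴) generated by γ₁: (x,y,z,t) ↦ (x, y + b/2, −z, t + d/2), γ₂: (x,y,z,t) ↦ (−x, y, z + c/2, −t), γ₃: (x,y,z,t) ↦ (x + a/2, −y, z, −t) (the Hantzsche–Wendt manifold H-W₁, with a,b,c,d > 0 and lattice Λ = ℤ(a,0,0,0)+ℤ(0,b,0,0)+ℤ(0,0,c,0)+ℤ(0,0,0,d)), every translation t_v with 2v ∈ Λ, v ∉ Λ, that normalizes Γ yields a group ⟨Γ, t_v⟩ containing a nontrivial element with a fixed point. -/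

import Mathlib

noncomputable section

/-- Euclidean space `E^n`. -/
abbrev E (n : ℕ) : Type := EuclideanSpace ℝ (Fin n)

/-- Discreteness of a group of isometries, expressed as proper discontinuity of its action. -/
def IsDiscreteGrp {n : ℕ} (Γ : Subgroup (E n ≃ᵢ E n)) : Prop :=
  ∀ K : Set (E n), IsCompact K →
    {γ : E n ≃ᵢ E n | γ ∈ Γ ∧ ((γ '' K) ∩ K).Nonempty}.Finite

/-- Cocompactness of a group of isometries of `E^n`. -/
def IsCocompactGrp {n : ℕ} (Γ : Subgroup (E n ≃ᵢ E n)) : Prop :=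
  ∃ K : Set (E n), IsCompact K ∧ ∀ x : E n, ∃ γ ∈ Γ, γ x ∈ K

/-- The action of `Γ` on `E^n` is free. -/
def ActsFreely {n : ℕ} (Γ : Subgroup (E n ≃ᵢ E n)) : Prop :=
  ∀ γ ∈ Γ, (∃ x : E n, γ x = x) → γ = 1

/-- A crystallographic group: discrete and cocompact. -/
def IsCrystallographic {n : ℕ} (Γ : Subgroup (E n ≃ᵢ E n)) : Prop :=
  IsDiscreteGrp Γ ∧ IsCocompactGrp Γ

/-- A Bieberbach group: discrete, cocompact, acting freely. -/
def IsBieberbach {n : ℕ} (Γ : Subgroup (E n ≃ᵢ E n)) : Prop :=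
  IsDiscreteGrp Γ ∧ IsCocompactGrp Γ ∧ ActsFreely Γ

/-- `f` is a translation. -/
def IsTranslation {n : ℕ} (f : E n ≃ᵢ E n) : Prop :=
  ∃ a : E n, ∀ x : E n, f x = x + a

def sg (e : Bool) : ℤ := bif e then -1 else 1

lemma trans_inv {T : E 4 ≃ᵢ E 4} {u : E 4} (hT : ∀ x, T x = x + u) (x : E 4) :
    T⁻¹ x = x - u := by
  have h1 : T (x - u) = x := by rw [hT]; abel
  have h2 : (T⁻¹ * T) (x - u) = x - u := by rw [inv_mul_cancel]; rfl
  calc T⁻¹ x = T⁻¹ (T (x - u)) := by rw [h1]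
    _ = x - u := h2

lemma trans_zpow {T : E 4 ≃ᵢ E 4} {u : E 4} (hT : ∀ x, T x = x + u) :
    ∀ (j : ℤ) (x : E 4), (T ^ j) x = x + (j : ℝ) • u := by
  intro j
  induction j using Int.induction_on with
  | zero => intro x; simp
  | succ n ih =>
      intro x
      have h : (T ^ ((n : ℤ) + 1)) x = (T ^ (n : ℤ)) (T x) := by
        rw [zpow_add_one]; rfl
      rw [h, hT, ih]
      push_cast
      ext i
      simp [add_smul]
      ring
  | pred n ih =>
      intro x
      have h : (T ^ (-(n : ℤ) - 1)) x = (T ^ (-(n : ℤ))) (T⁻¹ x) := by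
        rw [zpow_sub_one]; rfl
      rw [h, trans_inv hT, ih]
      push_cast
      ext i
      simp [sub_smul, sub_eq_add_neg]
      ring

lemma fixed_of_form (g : E 4 ≃ᵢ E 4) (e : Fin 4 → Bool) (w : Fin 4 → ℝ) (i₀ : Fin 4)
    (hi₀ : e i₀ = true)
    (hg : ∀ (x : E 4) (i : Fin 4), g x i = (cond (e i) (-(x i)) (x i)) + w i)
    (hw : ∀ i, e i = false → w i = 0) :
    g ≠ 1 ∧ ∃ x : E 4, g x = x := by
  constructor
  · intro h
    have h0 := hg 0 i₀
    have h1 := hg (EuclideanSpace.single i₀ (1 : ℝ)) i₀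
    rw [h] at h0 h1
    simp [hi₀, EuclideanSpace.single_apply] at h0 h1
    linarith
  · refine ⟨WithLp.toLp 2 (fun i => w i / 2 : Fin 4 → ℝ), ?_⟩
    ext i
    rw [hg]
    cases he : e i
    · rw [hw i he]; simp
    · show -(w i / 2) + w i = w i / 2
      ring

def HWform (a b c d : ℝ) (g : E 4 ≃ᵢ E 4) : Prop :=
  ∃ (e : Fin 4 → Bool) (k : Fin 4 → ℤ),
    k 0 % 2 = (cond (e 1) 1 0) ∧ k 1 % 2 = (cond (e 2) 1 0) ∧
    k 2 % 2 = (cond (e 0) 1 0) ∧ k 3 % 2 = (cond (e 2) 1 0) ∧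
    ∀ x : E 4, g x = ![(sg (e 0) : ℝ) * x 0 + (k 0 : ℝ) * (a / 2),
      (sg (e 1) : ℝ) * x 1 + (k 1 : ℝ) * (b / 2),
      (sg (e 2) : ℝ) * x 2 + (k 2 : ℝ) * (c / 2),
      (sg (e 3) : ℝ) * x 3 + (k 3 : ℝ) * (d / 2)]

def HWgrp (a b c d : ℝ) : Subgroup (E 4 ≃ᵢ E 4) where
  carrier := {g | HWform a b c d g}
  one_mem' := by
    refine ⟨fun _ => false, fun _ => 0, by decide, by decide, by decide, by decide, ?_⟩
    intro x
    funext i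
    fin_cases i <;> simp [sg]
  mul_mem' := by
    rintro g h ⟨e, k, p0, p1, p2, p3, hf⟩ ⟨e', k', q0, q1, q2, q3, hf'⟩
    refine ⟨fun i => xor (e i) (e' i), fun i => k i + sg (e i) * k' i, ?_, ?_, ?_, ?_, ?_⟩
    · cases hh : e 0 <;> cases h1 : e 1 <;> cases h2 : e' 1 <;>
        simp [sg, hh, h1, h2] at p0 q0 ⊢ <;> omega
    · cases hh : e 1 <;> cases h1 : e 2 <;> cases h2 : e' 2 <;>
        simp [sg, hh, h1, h2] at p1 q1 ⊢ <;> omega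
    · cases hh : e 2 <;> cases h1 : e 0 <;> cases h2 : e' 0 <;>
        simp [sg, hh, h1, h2] at p2 q2 ⊢ <;> omega
    · cases hh : e 3 <;> cases h1 : e 2 <;> cases h2 : e' 2 <;>
        simp [sg, hh, h1, h2] at p3 q3 ⊢ <;> omega
    · intro x
      have hmul : (g * h) x = g (h x) := rfl
      rw [hmul, hf, hf']
      funext i
      fin_cases i <;>
        [cases he : e 0 <;> cases he' : e' 0;
         cases he : e 1 <;> cases he' : e' 1;
         cases he : e 2 <;> cases he' : e' 2;
         cases he : e 3 <;> cases he' : e' 3] <;>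
        simp [sg, he, he'] <;> push_cast <;> ring
  inv_mem' := by
    rintro g ⟨e, k, p0, p1, p2, p3, hf⟩
    refine ⟨e, fun i => -(sg (e i)) * k i, ?_, ?_, ?_, ?_, ?_⟩
    · cases hh : e 0 <;> simp [sg, hh] at p0 ⊢ <;> omega
    · cases hh : e 1 <;> simp [sg, hh] at p1 ⊢ <;> omega
    · cases hh : e 2 <;> simp [sg, hh] at p2 ⊢ <;> omega
    · cases hh : e 3 <;> simp [sg, hh] at p3 ⊢ <;> omega
    · intro y
      set z : E 4 := WithLp.toLp 2 ![(sg (e 0) : ℝ) * y 0 + ((-(sg (e 0)) * k 0 : ℤ) : ℝ) * (a / 2),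
        (sg (e 1) : ℝ) * y 1 + ((-(sg (e 1)) * k 1 : ℤ) : ℝ) * (b / 2),
        (sg (e 2) : ℝ) * y 2 + ((-(sg (e 2)) * k 2 : ℤ) : ℝ) * (c / 2),
        (sg (e 3) : ℝ) * y 3 + ((-(sg (e 3)) * k 3 : ℤ) : ℝ) * (d / 2)] with hz
      have hgz : g z = y := by
        apply WithLp.ofLp_injective
        rw [hf]
        funext i
        fin_cases i <;>
          [cases he : e 0; cases he : e 1; cases he : e 2; cases he : e 3] <;>
          simp [hz, sg, he] <;> push_cast <;> ring
      have hcan : (g⁻¹ * g) z = z := by rw [inv_mul_cancel]; rfl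
      exact congrArg WithLp.ofLp (calc g⁻¹ y = g⁻¹ (g z) := by rw [hgz]
        _ = z := hcan)

set_option maxHeartbeats 1600000 in
/-- for the 4-dimensional Hantzsche–Wendt group `Γ` of `H-W₁`,
generated by `γ₁ : (x,y,z,t) ↦ (x, y+b/2, -z, t+d/2)`,
`γ₂ : (x,y,z,t) ↦ (-x, y, z+c/2, -t)`, `γ₃ : (x,y,z,t) ↦ (x+a/2, -y, z, -t)`
together with the lattice `Λ = ℤ(a,0,0,0) + ℤ(0,b,0,0) + ℤ(0,0,c,0) + ℤ(0,0,0,d)`,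
every translation `t_v` with `2v ∈ Λ`, `v ∉ Λ` normalizing `Γ` yields a group
`⟨Γ, t_v⟩` containing a nontrivial element with a fixed point. -/
theorem HW1_no_admissible_translation (a b c d : ℝ)
    (ha : 0 < a) (hb : 0 < b) (hc : 0 < c) (hd : 0 < d)
    (γ₁ γ₂ γ₃ T₁ T₂ T₃ T₄ : E 4 ≃ᵢ E 4)
    (hγ₁ : ∀ x : E 4, γ₁ x = ![x 0, x 1 + b / 2, -(x 2), x 3 + d / 2])
    (hγ₂ : ∀ x : E 4, γ₂ x = ![-(x 0), x 1, x 2 + c / 2, -(x 3)])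
    (hγ₃ : ∀ x : E 4, γ₃ x = ![x 0 + a / 2, -(x 1), x 2, -(x 3)])
    (hT₁ : ∀ x : E 4, T₁ x = ![x 0 + a, x 1, x 2, x 3])
    (hT₂ : ∀ x : E 4, T₂ x = ![x 0, x 1 + b, x 2, x 3])
    (hT₃ : ∀ x : E 4, T₃ x = ![x 0, x 1, x 2 + c, x 3])
    (hT₄ : ∀ x : E 4, T₄ x = ![x 0, x 1, x 2, x 3 + d])
    (v : E 4) (τ : E 4 ≃ᵢ E 4) (hτ : ∀ x : E 4, τ x = x + v)
    (h2v : ∃ s ∈ Subgroup.closure {γ₁, γ₂, γ₃, T₁, T₂, T₃, T₄},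
      ∀ x : E 4, s x = x + (2 : ℝ) • v)
    (hv : τ ∉ Subgroup.closure {γ₁, γ₂, γ₃, T₁, T₂, T₃, T₄})
    (hnorm : ∀ δ ∈ Subgroup.closure {γ₁, γ₂, γ₃, T₁, T₂, T₃, T₄},
      τ * δ * τ⁻¹ ∈ Subgroup.closure {γ₁, γ₂, γ₃, T₁, T₂, T₃, T₄}) :
    ∃ γ ∈ Subgroup.closure
      ((Subgroup.closure {γ₁, γ₂, γ₃, T₁, T₂, T₃, T₄} : Subgroup (E 4 ≃ᵢ E 4)) ∪ {τ} :
        Set (E 4 ≃ᵢ E 4)),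
      γ ≠ 1 ∧ ∃ x : E 4, γ x = x := by
  classical
  -- translation lemmas for the lattice generators
  obtain ⟨u₁, hu₁⟩ : ∃ u : E 4, u = ![a, 0, 0, 0] := ⟨WithLp.toLp 2 _, rfl⟩
  obtain ⟨u₂, hu₂⟩ : ∃ u : E 4, u = ![0, b, 0, 0] := ⟨WithLp.toLp 2 _, rfl⟩
  obtain ⟨u₃, hu₃⟩ : ∃ u : E 4, u = ![0, 0, c, 0] := ⟨WithLp.toLp 2 _, rfl⟩
  obtain ⟨u₄, hu₄⟩ : ∃ u : E 4, u = ![0, 0, 0, d] := ⟨WithLp.toLp 2 _, rfl⟩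
  have hT₁' : ∀ x : E 4, T₁ x = x + u₁ := by
    intro x; apply WithLp.ofLp_injective; rw [hT₁, WithLp.ofLp_add, hu₁]; funext i; fin_cases i <;> simp
  have hT₂' : ∀ x : E 4, T₂ x = x + u₂ := by
    intro x; apply WithLp.ofLp_injective; rw [hT₂, WithLp.ofLp_add, hu₂]; funext i; fin_cases i <;> simp
  have hT₃' : ∀ x : E 4, T₃ x = x + u₃ := by
    intro x; apply WithLp.ofLp_injective; rw [hT₃, WithLp.ofLp_add, hu₃]; funext i; fin_cases i <;> simp
  have hT₄' : ∀ x : E 4, T₄ x = x + u₄ := by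
    intro x; apply WithLp.ofLp_injective; rw [hT₄, WithLp.ofLp_add, hu₄]; funext i; fin_cases i <;> simp
  -- the closure of the generators lies in HWgrp
  have hsub : Subgroup.closure {γ₁, γ₂, γ₃, T₁, T₂, T₃, T₄} ≤ HWgrp a b c d := by
    rw [Subgroup.closure_le]
    intro g hg
    simp only [Set.mem_insert_iff, Set.mem_singleton_iff] at hg
    rcases hg with rfl | rfl | rfl | rfl | rfl | rfl | rfl
    · exact ⟨![false, false, true, false], ![0, 1, 0, 1], by decide, by decide, by decide,
        by decide, by intro x; rw [hγ₁]; funext i; fin_cases i <;> simp [sg] <;> ring⟩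
    · exact ⟨![true, false, false, true], ![0, 0, 1, 0], by decide, by decide, by decide,
        by decide, by intro x; rw [hγ₂]; funext i; fin_cases i <;> simp [sg] <;> ring⟩
    · exact ⟨![false, true, false, true], ![1, 0, 0, 0], by decide, by decide, by decide,
        by decide, by intro x; rw [hγ₃]; funext i; fin_cases i <;> simp [sg] <;> ring⟩
    · exact ⟨fun _ => false, ![2, 0, 0, 0], by decide, by decide, by decide,
        by decide, by intro x; rw [hT₁]; funext i; fin_cases i <;> simp [sg] <;> ring⟩
    · exact ⟨fun _ => false, ![0, 2, 0, 0], by decide, by decide, by decide,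
        by decide, by intro x; rw [hT₂]; funext i; fin_cases i <;> simp [sg] <;> ring⟩
    · exact ⟨fun _ => false, ![0, 0, 2, 0], by decide, by decide, by decide,
        by decide, by intro x; rw [hT₃]; funext i; fin_cases i <;> simp [sg] <;> ring⟩
    · exact ⟨fun _ => false, ![0, 0, 0, 2], by decide, by decide, by decide,
        by decide, by intro x; rw [hT₄]; funext i; fin_cases i <;> simp [sg] <;> ring⟩
  -- extract the half-lattice form of v
  obtain ⟨s, hsΓ, hsx⟩ := h2v
  obtain ⟨e, k, p0, p1, p2, p3, hf⟩ := hsub hsΓ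
  have hf0 : ∀ x : E 4, s x 0 = (sg (e 0) : ℝ) * x 0 + (k 0 : ℝ) * (a / 2) := by
    intro x; rw [hf]; simp
  have hf1 : ∀ x : E 4, s x 1 = (sg (e 1) : ℝ) * x 1 + (k 1 : ℝ) * (b / 2) := by
    intro x; rw [hf]; simp
  have hf2 : ∀ x : E 4, s x 2 = (sg (e 2) : ℝ) * x 2 + (k 2 : ℝ) * (c / 2) := by
    intro x; rw [hf]; simp
  have hf3 : ∀ x : E 4, s x 3 = (sg (e 3) : ℝ) * x 3 + (k 3 : ℝ) * (d / 2) := by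
    intro x; rw [hf]; simp
  have extract : ∀ (i : Fin 4) (t : ℝ), (∀ x : E 4, s x i = (sg (e i) : ℝ) * x i + (k i : ℝ) * t) →
      e i = false ∧ (k i : ℝ) * t = 2 * v i := by
    intro i t hfi
    have h1 : s (0 : E 4) i = (0 : E 4) i + 2 * v i := by rw [hsx]; simp
    have h2 : s (WithLp.toLp 2 (fun _ => (1 : ℝ) : Fin 4 → ℝ)) i = 1 + 2 * v i := by rw [hsx]; simp
    rw [hfi] at h1 h2
    have he : e i = false := by
      cases he : e i
      · rfl
      · exfalso; rw [he] at h1 h2; simp [sg] at h1 h2; linarith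
    refine ⟨he, ?_⟩
    rw [he] at h1; simp [sg] at h1; linarith
  obtain ⟨he0, hk0⟩ := extract 0 (a / 2) hf0
  obtain ⟨he1, hk1⟩ := extract 1 (b / 2) hf1
  obtain ⟨he2, hk2⟩ := extract 2 (c / 2) hf2
  obtain ⟨he3, hk3⟩ := extract 3 (d / 2) hf3
  -- the k i are even
  rw [he1] at p0
  rw [he2] at p1
  rw [he0] at p2
  rw [he2] at p3
  simp only [Bool.cond_false] at p0 p1 p2 p3
  obtain ⟨m₀, hm₀⟩ : ∃ m, k 0 = 2 * m := ⟨k 0 / 2, by omega⟩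
  obtain ⟨m₁, hm₁⟩ : ∃ m, k 1 = 2 * m := ⟨k 1 / 2, by omega⟩
  obtain ⟨m₂, hm₂⟩ : ∃ m, k 2 = 2 * m := ⟨k 2 / 2, by omega⟩
  obtain ⟨m₃, hm₃⟩ : ∃ m, k 3 = 2 * m := ⟨k 3 / 2, by omega⟩
  have hv0 : v 0 = (m₀ : ℝ) * (a / 2) := by rw [hm₀] at hk0; push_cast at hk0; linarith
  have hv1 : v 1 = (m₁ : ℝ) * (b / 2) := by rw [hm₁] at hk1; push_cast at hk1; linarith
  have hv2 : v 2 = (m₂ : ℝ) * (c / 2) := by rw [hm₂] at hk2; push_cast at hk2; linarith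
  have hv3 : v 3 = (m₃ : ℝ) * (d / 2) := by rw [hm₃] at hk3; push_cast at hk3; linarith
  -- membership helpers
  set C := Subgroup.closure
      ((Subgroup.closure {γ₁, γ₂, γ₃, T₁, T₂, T₃, T₄} : Subgroup (E 4 ≃ᵢ E 4)) ∪ {τ} :
        Set (E 4 ≃ᵢ E 4)) with hC
  have hΓC : ∀ g : E 4 ≃ᵢ E 4, g ∈ Subgroup.closure {γ₁, γ₂, γ₃, T₁, T₂, T₃, T₄} → g ∈ C :=
    fun g hg => Subgroup.subset_closure (Or.inl hg)
  have hγ₁Γ : γ₁ ∈ C := hΓC _ (Subgroup.subset_closure (by simp))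
  have hγ₂Γ : γ₂ ∈ C := hΓC _ (Subgroup.subset_closure (by simp))
  have hγ₃Γ : γ₃ ∈ C := hΓC _ (Subgroup.subset_closure (by simp))
  have hT₁Γ : T₁ ∈ C := hΓC _ (Subgroup.subset_closure (by simp))
  have hT₂Γ : T₂ ∈ C := hΓC _ (Subgroup.subset_closure (by simp))
  have hT₃Γ : T₃ ∈ C := hΓC _ (Subgroup.subset_closure (by simp))
  have hT₄Γ : T₄ ∈ C := hΓC _ (Subgroup.subset_closure (by simp))
  have hτC : τ ∈ C := Subgroup.subset_closure (Or.inr rfl)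
  -- main case analysis
  rcases Int.even_or_odd m₁ with hEm₁ | ⟨p, hp⟩
  · rcases Int.even_or_odd m₃ with hEm₃ | ⟨p, hp⟩
    · rcases Int.even_or_odd m₀ with hEm₀ | ⟨p, hp⟩
      · rcases Int.even_or_odd m₂ with hEm₂ | ⟨p, hp⟩
        · -- all even : τ ∈ Γ, contradiction
          exfalso
          obtain ⟨q₀, hq₀⟩ := hEm₀
          obtain ⟨q₁, hq₁⟩ := hEm₁
          obtain ⟨q₂, hq₂⟩ := hEm₂
          obtain ⟨q₃, hq₃⟩ := hEm₃
          apply hv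
          have hτeq : τ = T₁ ^ q₀ * (T₂ ^ q₁ * (T₃ ^ q₂ * T₄ ^ q₃)) := by
            apply IsometryEquiv.ext
            intro x
            have hr : (T₁ ^ q₀ * (T₂ ^ q₁ * (T₃ ^ q₂ * T₄ ^ q₃))) x
                = (T₁ ^ q₀) ((T₂ ^ q₁) ((T₃ ^ q₂) ((T₄ ^ q₃) x))) := rfl
            rw [hτ, hr, trans_zpow hT₄', trans_zpow hT₃', trans_zpow hT₂', trans_zpow hT₁']
            ext i
            fin_cases i <;>
              simp [hv0, hv1, hv2, hv3, hq₀, hq₁, hq₂, hq₃, hu₁, hu₂, hu₃, hu₄] <;> push_cast <;> ring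
          rw [hτeq]
          have hmem : ∀ g : E 4 ≃ᵢ E 4, g ∈ ({γ₁, γ₂, γ₃, T₁, T₂, T₃, T₄} :
              Set (E 4 ≃ᵢ E 4)) → g ∈ Subgroup.closure {γ₁, γ₂, γ₃, T₁, T₂, T₃, T₄} :=
            fun g hg => Subgroup.subset_closure hg
          exact mul_mem (zpow_mem (hmem T₁ (by simp)) _)
            (mul_mem (zpow_mem (hmem T₂ (by simp)) _)
              (mul_mem (zpow_mem (hmem T₃ (by simp)) _) (zpow_mem (hmem T₄ (by simp)) _)))
        · -- m₂ odd, m₁ even : γ₂ τ case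
          obtain ⟨q, hq⟩ := hEm₁
          refine ⟨γ₂ * (τ * (T₃ ^ (-(p + 1)) * T₂ ^ (-q))), mul_mem hγ₂Γ (mul_mem hτC
            (mul_mem (zpow_mem hT₃Γ _) (zpow_mem hT₂Γ _))), ?_⟩
          apply fixed_of_form _ ![true, false, false, true] ![-(v 0), 0, 0, -(v 3)] 0 rfl
          · intro x i
            have hr : (γ₂ * (τ * (T₃ ^ (-(p + 1)) * T₂ ^ (-q)))) x
                = γ₂ (τ ((T₃ ^ (-(p + 1) : ℤ)) ((T₂ ^ (-q : ℤ)) x))) := rfl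
            rw [hr, trans_zpow hT₂', trans_zpow hT₃', hτ, hγ₂]
            fin_cases i <;> simp [hv1, hv2, hq, hp, hu₂, hu₃] <;> push_cast <;> ring
          · intro i hi
            fin_cases i <;> simp at hi ⊢
      · -- m₀ odd : γ₁ γ₃ τ case
        refine ⟨γ₁ * (γ₃ * (τ * T₁ ^ (-(p + 1)))), mul_mem hγ₁Γ (mul_mem hγ₃Γ
          (mul_mem hτC (zpow_mem hT₁Γ _))), ?_⟩
        apply fixed_of_form _ ![false, true, true, true]
          ![0, b / 2 - v 1, -(v 2), d / 2 - v 3] 1 rfl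
        · intro x i
          have hr : (γ₁ * (γ₃ * (τ * T₁ ^ (-(p + 1))))) x
              = γ₁ (γ₃ (τ ((T₁ ^ (-(p + 1) : ℤ)) x))) := rfl
          rw [hr, trans_zpow hT₁', hτ, hγ₁, hγ₃]
          fin_cases i <;> simp [hv0, hp, hu₁] <;> push_cast <;> ring
        · intro i hi
          fin_cases i <;> simp at hi ⊢
    · -- m₃ odd : γ₁ γ₂ γ₃ τ case
      refine ⟨γ₁ * (γ₂ * (γ₃ * (τ * T₄ ^ (-(p + 1))))), mul_mem hγ₁Γ (mul_mem hγ₂Γ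
        (mul_mem hγ₃Γ (mul_mem hτC (zpow_mem hT₄Γ _)))), ?_⟩
      apply fixed_of_form _ ![true, true, true, false]
        ![-(v 0) - a / 2, b / 2 - v 1, -(v 2) - c / 2, 0] 0 rfl
      · intro x i
        have hr : (γ₁ * (γ₂ * (γ₃ * (τ * T₄ ^ (-(p + 1)))))) x
            = γ₁ (γ₂ (γ₃ (τ ((T₄ ^ (-(p + 1) : ℤ)) x)))) := rfl
        rw [hr, trans_zpow hT₄', hτ, hγ₁, hγ₂, hγ₃]
        fin_cases i <;> simp [hv3, hp, hu₄] <;> push_cast <;> ring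
      · intro i hi
        fin_cases i <;> simp at hi ⊢
  · -- m₁ odd : γ₁ γ₂ τ case
    refine ⟨γ₁ * (γ₂ * (τ * T₂ ^ (-(p + 1)))), mul_mem hγ₁Γ (mul_mem hγ₂Γ
      (mul_mem hτC (zpow_mem hT₂Γ _))), ?_⟩
    apply fixed_of_form _ ![true, false, true, true]
      ![-(v 0), 0, -(v 2) - c / 2, d / 2 - v 3] 0 rfl
    · intro x i
      have hr : (γ₁ * (γ₂ * (τ * T₂ ^ (-(p + 1))))) x
          = γ₁ (γ₂ (τ ((T₂ ^ (-(p + 1) : ℤ)) x))) := rfl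
      rw [hr, trans_zpow hT₂', hτ, hγ₁, hγ₂]
      fin_cases i <;> simp [hv1, hp, hu₂] <;> push_cast <;> ring
    · intro i hi
      fin_cases i <;> simp at hi ⊢
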